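/- For any additive category M, there is a canonical equivalence of categories Kom(Kar(M)) ≃ Kar(Kom(M)), where Kom denotes the category of bounded chain complexes and Kar denotes the Karoubi envelope (idempotent completion). -/

import Mathlib

open CategoryTheory CategoryTheory.Limits CategoryTheory.Idempotents

/-- A cochain complex is bounded if its components vanish outside a finite interval. -/
def IsBoundedComplex {M : Type*} [Category M] [HasZeroMorphisms M]
    (K : CochainComplex M ℤ) : Prop :=
  ∃ a b : ℤ, ∀ i : ℤ, i < a ∨ b < i → IsZero (K.X i)

namespace KomKarAux

open ZeroObject

section Restrict

variable {C D : Type*} [Category C] [Category D]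

/-- Restrict an equivalence to full subcategories. -/
@[simps!]
def equivFullSub (E : C ≌ D) (P : C → Prop) (Q : D → Prop)
    (h1 : ∀ X, P X → Q (E.functor.obj X)) (h2 : ∀ Y, Q Y → P (E.inverse.obj Y)) :
    ObjectProperty.FullSubcategory P ≌ ObjectProperty.FullSubcategory Q :=
  CategoryTheory.Equivalence.mk
    (ObjectProperty.lift Q (ObjectProperty.ι P ⋙ E.functor) (fun X => h1 _ X.2))
    (ObjectProperty.lift P (ObjectProperty.ι Q ⋙ E.inverse) (fun Y => h2 _ Y.2))
    (NatIso.ofComponents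
      (fun X => ObjectProperty.isoMk _ (E.unitIso.app X.obj))
      (fun f => by ext; exact E.unit.naturality f.hom))
    (NatIso.ofComponents
      (fun Y => ObjectProperty.isoMk _ (E.counitIso.app Y.obj))
      (fun f => by ext; exact E.counit.naturality f.hom))

end Restrict

lemma karoubi_isZero_iff {C : Type*} [Category C] [Preadditive C] (P : Karoubi C) :
    IsZero P ↔ P.p = 0 := by
  rw [IsZero.iff_id_eq_zero]
  constructor
  · intro h
    have := congrArg Karoubi.Hom.f h
    simpa using this
  · intro h
    apply Karoubi.hom_ext
    simpa using h

section Trunc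

variable {M : Type*} [Category M] [Preadditive M] [HasZeroObject M]
variable (K : CochainComplex M ℤ) (a b : ℤ)

/-- Components of the stupid truncation. -/
noncomputable def truncX (i : ℤ) : M := if a ≤ i ∧ i ≤ b then K.X i else 0

noncomputable def truncπ (i : ℤ) : K.X i ⟶ truncX K a b i :=
  if h : a ≤ i ∧ i ≤ b then eqToHom (by rw [truncX, if_pos h]) else 0

noncomputable def truncι (i : ℤ) : truncX K a b i ⟶ K.X i :=
  if h : a ≤ i ∧ i ≤ b then eqToHom (by rw [truncX, if_pos h]) else 0

lemma isZero_truncX (i : ℤ) (h : ¬(a ≤ i ∧ i ≤ b)) : IsZero (truncX K a b i) := by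
  rw [truncX, if_neg h]
  exact isZero_zero M

lemma ι_π (i : ℤ) : truncι K a b i ≫ truncπ K a b i = 𝟙 _ := by
  by_cases h : a ≤ i ∧ i ≤ b
  · rw [truncι, truncπ, dif_pos h, dif_pos h, eqToHom_trans, eqToHom_refl]
  · exact (isZero_truncX K a b i h).eq_of_src _ _

lemma π_ι (i : ℤ) (h : a ≤ i ∧ i ≤ b) : truncπ K a b i ≫ truncι K a b i = 𝟙 _ := by
  rw [truncι, truncπ, dif_pos h, dif_pos h, eqToHom_trans, eqToHom_refl]

lemma π_eq_zero (i : ℤ) (h : ¬(a ≤ i ∧ i ≤ b)) : truncπ K a b i = 0 := dif_neg h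

lemma ι_eq_zero (i : ℤ) (h : ¬(a ≤ i ∧ i ≤ b)) : truncι K a b i = 0 := dif_neg h

/-- The stupid truncation of a cochain complex to the interval `[a, b]`. -/
noncomputable def truncC : CochainComplex M ℤ where
  X := truncX K a b
  d i j := truncι K a b i ≫ K.d i j ≫ truncπ K a b j
  shape i j hij := by rw [K.shape i j hij]; simp
  d_comp_d' i j k _ _ := by
    by_cases h : a ≤ j ∧ j ≤ b
    · slice_lhs 3 4 => rw [π_ι K a b j h]
      simp
    · rw [π_eq_zero K a b j h]
      simp

variable {K a b} (e : K ⟶ K)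

section

variable (he : ∀ i : ℤ, i < a ∨ b < i → e.f i = 0)
include he

lemma e_π_ι_assoc (i : ℤ) {Z : M} (g : K.X i ⟶ Z) :
    e.f i ≫ truncπ K a b i ≫ truncι K a b i ≫ g = e.f i ≫ g := by
  by_cases h : a ≤ i ∧ i ≤ b
  · rw [← Category.assoc (truncπ K a b i), π_ι K a b i h, Category.id_comp]
  · rw [he i (by omega), zero_comp, zero_comp]

lemma π_ι_e_assoc (i : ℤ) {Z : M} (g : K.X i ⟶ Z) :
    truncπ K a b i ≫ truncι K a b i ≫ e.f i ≫ g = e.f i ≫ g := by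
  by_cases h : a ≤ i ∧ i ≤ b
  · rw [← Category.assoc (truncπ K a b i), π_ι K a b i h, Category.id_comp]
  · rw [he i (by omega)]; simp

/-- The truncated idempotent. -/
noncomputable def truncE : truncC K a b ⟶ truncC K a b where
  f i := truncι K a b i ≫ e.f i ≫ truncπ K a b i
  comm' i j _ := by
    dsimp [truncC]
    simp only [Category.assoc]
    rw [e_π_ι_assoc e he i, π_ι_e_assoc e he j]
    slice_lhs 2 3 => rw [e.comm i j]
    simp only [Category.assoc]

end

lemma truncE_idem (hee : e ≫ e = e) (he : ∀ i : ℤ, i < a ∨ b < i → e.f i = 0) :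
    truncE e he ≫ truncE e he = truncE e he := by
  ext i
  have h2 : e.f i ≫ e.f i = e.f i := HomologicalComplex.congr_hom hee i
  dsimp [truncE, truncC]
  simp only [Category.assoc]
  rw [e_π_ι_assoc e he i]
  slice_lhs 2 3 => rw [h2]

lemma π_ι_e (he : ∀ i : ℤ, i < a ∨ b < i → e.f i = 0) (i : ℤ) :
    truncπ K a b i ≫ truncι K a b i ≫ e.f i = e.f i := by
  by_cases h : a ≤ i ∧ i ≤ b
  · rw [← Category.assoc, π_ι K a b i h, Category.id_comp]
  · rw [he i (by omega)]; simp

lemma isBounded_truncC : IsBoundedComplex (truncC K a b) :=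
  ⟨a, b, fun i hi => isZero_truncX K a b i (by omega)⟩

/-- The canonical isomorphism between an idempotent with bounded support and its
stupid truncation, in the Karoubi envelope of the category of complexes. -/
noncomputable def truncIso (hee : e ≫ e = e) (he : ∀ i : ℤ, i < a ∨ b < i → e.f i = 0) :
    (⟨K, e, hee⟩ : Karoubi (CochainComplex M ℤ)) ≅
      ⟨truncC K a b, truncE e he, truncE_idem e hee he⟩ where
  hom := ⟨{ f := fun i => e.f i ≫ truncπ K a b i
            comm' := fun i j _ => by
              dsimp [truncC]
              simp only [Category.assoc]
              rw [e_π_ι_assoc e he i]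
              slice_lhs 1 2 => rw [e.comm i j]
              simp only [Category.assoc] }, by
    ext i
    have h2 : e.f i ≫ e.f i = e.f i := HomologicalComplex.congr_hom hee i
    dsimp [truncE, truncC]
    simp only [Category.assoc]
    rw [e_π_ι_assoc e he i]
    slice_lhs 1 2 => rw [h2]
    slice_lhs 1 2 => rw [h2]⟩
  inv := ⟨{ f := fun i => truncι K a b i ≫ e.f i
            comm' := fun i j _ => by
              dsimp [truncC]
              simp only [Category.assoc]
              rw [π_ι_e e he j]
              slice_lhs 2 3 => rw [e.comm i j] }, by
    ext i
    have h2 : e.f i ≫ e.f i = e.f i := HomologicalComplex.congr_hom hee i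
    dsimp [truncE, truncC]
    simp only [Category.assoc]
    rw [π_ι_e_assoc e he i]
    slice_lhs 2 3 => rw [h2]
    slice_lhs 2 3 => rw [h2]⟩
  hom_inv_id := by
    apply CategoryTheory.Idempotents.Karoubi.hom_ext
    ext i
    have h2 : e.f i ≫ e.f i = e.f i := HomologicalComplex.congr_hom hee i
    dsimp [truncC]
    simp only [Category.assoc]
    rw [e_π_ι_assoc e he i, h2]
  inv_hom_id := by
    apply CategoryTheory.Idempotents.Karoubi.hom_ext
    ext i
    have h2 : e.f i ≫ e.f i = e.f i := HomologicalComplex.congr_hom hee i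
    dsimp [truncE, truncC]
    slice_lhs 2 3 => rw [h2]

end Trunc

end KomKarAux

/-- For any additive category `M` there is a canonical equivalence
`Kom(Kar(M)) ≃ Kar(Kom(M))` between the category of bounded complexes over the Karoubi
envelope of `M` and the Karoubi envelope of the category of bounded complexes over `M`. -/
theorem kom_kar_equiv_kar_kom
    (M : Type*) [Category M] [Preadditive M] [HasFiniteBiproducts M] :
    Nonempty
      ((ObjectProperty.FullSubcategory fun K : CochainComplex (Karoubi M) ℤ => IsBoundedComplex K) ≌
        Karoubi (ObjectProperty.FullSubcategory fun K : CochainComplex M ℤ => IsBoundedComplex K)) := by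
  classical
  let E := karoubiHomologicalComplexEquivalence M (ComplexShape.up ℤ)
  let Q : Karoubi (CochainComplex M ℤ) → Prop := fun P => IsBoundedComplex (E.functor.obj P)
  have h1 : ∀ L : CochainComplex (Karoubi M) ℤ, IsBoundedComplex L →
      Q (E.symm.functor.obj L) := by
    rintro L ⟨a, b, h⟩
    exact ⟨a, b, fun i hi => h i hi⟩
  have h2 : ∀ P, Q P → IsBoundedComplex (E.symm.inverse.obj P) := fun P hP => hP
  let A := KomKarAux.equivFullSub E.symm _ Q h1 h2
  let F : Karoubi (ObjectProperty.FullSubcategory fun K : CochainComplex M ℤ => IsBoundedComplex K) ⥤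
      ObjectProperty.FullSubcategory Q :=
    { obj := fun P => ⟨⟨P.X.obj, P.p.hom, congrArg InducedCategory.Hom.hom P.idem⟩, by
        obtain ⟨a, b, h⟩ := P.X.2
        exact ⟨a, b, fun i hi => by
          rw [KomKarAux.karoubi_isZero_iff]
          exact (h i hi).eq_of_src _ _⟩⟩
      map := fun f => ObjectProperty.homMk ⟨f.f.hom, congrArg InducedCategory.Hom.hom f.comm⟩ }
  have faithful : F.Faithful := ⟨fun {P Q'} {f g} h => by
    apply CategoryTheory.Idempotents.Karoubi.hom_ext
    have := congrArg CategoryTheory.Idempotents.Karoubi.Hom.f (congrArg InducedCategory.Hom.hom h)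
    ext : 1; exact this⟩
  have full : F.Full := ⟨fun {P Q'} g =>
    ⟨⟨ObjectProperty.homMk g.hom.f, by ext : 1; exact g.hom.comm⟩, by ext; rfl⟩⟩
  have essSurj : F.EssSurj := ⟨fun Y => by
    obtain ⟨P, hP⟩ := Y
    obtain ⟨a, b, h⟩ := hP
    have he : ∀ i : ℤ, i < a ∨ b < i → P.p.f i = 0 := fun i hi => by
      have := h i hi
      rw [KomKarAux.karoubi_isZero_iff] at this
      exact this
    refine ⟨⟨⟨KomKarAux.truncC P.X a b, KomKarAux.isBounded_truncC (K := P.X) (a := a) (b := b)⟩,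
      ObjectProperty.homMk (KomKarAux.truncE P.p he), by ext : 1; exact KomKarAux.truncE_idem P.p P.idem he⟩,
      ⟨(ObjectProperty.ι Q).preimageIso ?_⟩⟩
    exact (KomKarAux.truncIso P.p P.idem he).symm⟩
  have : F.IsEquivalence := { }
  exact ⟨A.trans F.asEquivalence.symm⟩
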